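/- In a finite simple undirected graph G, the number of subgraphs S_Y (a path on 4 vertices with an extra pendant edge at one internal vertex, i.e., the 'chair'/fork obtained from an edge (i,j) by attaching two further neighbors to i and one further neighbor to j, all five vertices distinct and spanning no extra edges counted) satisfies |S_Y| = Σ_{(i,j)∈E} [ C(k_i−1, 2)·(k_j−1) + C(k_j−1, 2)·(k_i−1) ] − 2|S_{T1S}|, where |S_{T1S}| is the number of triangles with one pendant edge. -/

import Mathlib

open Finset BigOperators Matrix SimpleGraph

noncomputable section

variable {V : Type*} [Fintype V] [DecidableEq V]

/-- Number of labelled (ordered) paths with `n` edges (`n+1` distinct vertices). -/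
def labPath (G : SimpleGraph V) [DecidableRel G.Adj] (n : ℕ) : ℕ :=
  (univ.filter (fun f : Fin (n + 1) → V =>
    Function.Injective f ∧ ∀ i : Fin n, G.Adj (f i.castSucc) (f i.succ))).card

/-- Number of edges, as a real number. -/
def p1 (G : SimpleGraph V) [DecidableRel G.Adj] : ℝ := G.edgeFinset.card

/-- Number of paths of length two (`P_2`, path on 3 vertices). -/
def p2 (G : SimpleGraph V) [DecidableRel G.Adj] : ℝ := (labPath G 2 : ℝ) / 2

/-- Number of paths of length three (`P_3`, path on 4 vertices). -/
def p3 (G : SimpleGraph V) [DecidableRel G.Adj] : ℝ := (labPath G 3 : ℝ) / 2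

/-- Number of paths of length four (`P_4`, path on 5 vertices). -/
def p4 (G : SimpleGraph V) [DecidableRel G.Adj] : ℝ := (labPath G 4 : ℝ) / 2

/-- Number of triangles. -/
def c3 (G : SimpleGraph V) [DecidableRel G.Adj] : ℝ :=
  ((univ.filter (fun f : Fin 3 → V => Function.Injective f ∧
    G.Adj (f 0) (f 1) ∧ G.Adj (f 1) (f 2) ∧ G.Adj (f 2) (f 0))).card : ℝ) / 6

/-- Number of 4-cycles. -/
def c4 (G : SimpleGraph V) [DecidableRel G.Adj] : ℝ :=
  ((univ.filter (fun f : Fin 4 → V => Function.Injective f ∧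
    G.Adj (f 0) (f 1) ∧ G.Adj (f 1) (f 2) ∧ G.Adj (f 2) (f 3) ∧ G.Adj (f 3) (f 0))).card : ℝ) / 8

/-- Number of 5-cycles. -/
def c5 (G : SimpleGraph V) [DecidableRel G.Adj] : ℝ :=
  ((univ.filter (fun f : Fin 5 → V => Function.Injective f ∧
    G.Adj (f 0) (f 1) ∧ G.Adj (f 1) (f 2) ∧ G.Adj (f 2) (f 3) ∧ G.Adj (f 3) (f 4) ∧
    G.Adj (f 4) (f 0))).card : ℝ) / 10

/-- Number of stars `S_{1,3}`: a center `f 0` adjacent to three leaves. -/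
def s13 (G : SimpleGraph V) [DecidableRel G.Adj] : ℝ :=
  ((univ.filter (fun f : Fin 4 → V => Function.Injective f ∧
    G.Adj (f 0) (f 1) ∧ G.Adj (f 0) (f 2) ∧ G.Adj (f 0) (f 3))).card : ℝ) / 6

/-- Number of tadpoles `S_{T1S}`: a triangle `f 0, f 1, f 2` with one pendant edge `f 0 – f 3`. -/
def sT1S (G : SimpleGraph V) [DecidableRel G.Adj] : ℝ :=
  ((univ.filter (fun f : Fin 4 → V => Function.Injective f ∧
    G.Adj (f 0) (f 1) ∧ G.Adj (f 1) (f 2) ∧ G.Adj (f 2) (f 0) ∧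
    G.Adj (f 0) (f 3))).card : ℝ) / 2

/-- Number of `S_{T2S}`: a triangle `f 0, f 1, f 2` with two pendant edges at `f 0`. -/
def sT2S (G : SimpleGraph V) [DecidableRel G.Adj] : ℝ :=
  ((univ.filter (fun f : Fin 5 → V => Function.Injective f ∧
    G.Adj (f 0) (f 1) ∧ G.Adj (f 1) (f 2) ∧ G.Adj (f 2) (f 0) ∧
    G.Adj (f 0) (f 3) ∧ G.Adj (f 0) (f 4))).card : ℝ) / 4

/-- Number of `S_Y` (the 'chair'/fork tree on 5 vertices): an edge `f 0 – f 1`,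
two further neighbours `f 2, f 3` of `f 0` and one further neighbour `f 4` of `f 1`. -/
def sY (G : SimpleGraph V) [DecidableRel G.Adj] : ℝ :=
  ((univ.filter (fun f : Fin 5 → V => Function.Injective f ∧
    G.Adj (f 0) (f 1) ∧ G.Adj (f 0) (f 2) ∧ G.Adj (f 0) (f 3) ∧
    G.Adj (f 1) (f 4))).card : ℝ) / 2

section AuxSY

variable (G : SimpleGraph V) [DecidableRel G.Adj]

private lemma sY_sum_edges_eq_half (F : V → V → ℝ) (hF : ∀ i j, F i j = F j i) :
    ∑ e ∈ G.edgeFinset, Sym2.lift ⟨F, hF⟩ e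
      = (∑ p ∈ (univ ×ˢ univ).filter (fun p : V × V => G.Adj p.1 p.2), F p.1 p.2) / 2 := by
  have h := Finset.sum_fiberwise_of_maps_to
    (g := fun p : V × V => Sym2.mk p.1 p.2) (t := G.edgeFinset)
    (f := fun p : V × V => F p.1 p.2)
    (s := (univ ×ˢ univ).filter (fun p : V × V => G.Adj p.1 p.2))
    (by intro p hp; simp only [mem_filter] at hp
        simpa [mem_edgeFinset, mem_edgeSet] using hp.2)
  rw [← h]
  rw [eq_div_iff (by norm_num : (2:ℝ) ≠ 0), Finset.sum_mul]
  refine Finset.sum_congr rfl ?_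
  intro e he
  rw [mem_edgeFinset] at he
  induction e with
  | _ i j =>
    have hadj : G.Adj i j := he
    have hij : i ≠ j := hadj.ne
    have : ((univ ×ˢ univ).filter (fun p : V × V => G.Adj p.1 p.2)).filter
        (fun p => Sym2.mk p.1 p.2 = s(i, j)) = {(i, j), (j, i)} := by
      ext p
      simp only [mem_filter, mem_product, mem_univ, true_and, mem_insert, mem_singleton,
        Sym2.eq, Sym2.rel_iff', Prod.swap_prod_mk, Prod.ext_iff]
      constructor
      · rintro ⟨_, h | h⟩
        · left; exact ⟨h.1, h.2⟩
        · right; exact ⟨h.1, h.2⟩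
      · rintro (⟨h1, h2⟩ | ⟨h1, h2⟩) <;> subst h1 <;> subst h2
        · exact ⟨hadj, Or.inl ⟨rfl, rfl⟩⟩
        · exact ⟨hadj.symm, Or.inr ⟨rfl, rfl⟩⟩
    rw [this, Finset.sum_pair (by simp [hij, Prod.ext_iff])]
    simp [Sym2.lift_mk, hF j i]
    ring

private lemma sY_nat_aux (m : ℕ) : (m-1) * (m-1) - (m-1) = (m-1) * (m-2) := by
  cases m with
  | zero => simp
  | succ n => cases n with
    | zero => simp
    | succ n' =>
        have e1 : n' + 2 - 1 = n' + 1 := rfl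
        have e2 : n' + 2 - 2 = n' := rfl
        rw [e1, e2, Nat.mul_succ]
        omega

/-- Auxiliary predicate: a relaxed `S_Y` pattern where `f 4` may coincide with `f 2` or `f 3`. -/
def sYW (f : Fin 5 → V) : Prop :=
  G.Adj (f 0) (f 1) ∧ G.Adj (f 0) (f 2) ∧ G.Adj (f 0) (f 3) ∧ G.Adj (f 1) (f 4) ∧
  f 2 ≠ f 3 ∧ f 1 ≠ f 2 ∧ f 1 ≠ f 3 ∧ f 0 ≠ f 4

instance : DecidablePred (sYW G) := by
  unfold sYW; infer_instance

private lemma sY_fiber_card (a b : V) (hab : G.Adj a b) :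
    ((univ.filter (sYW G)).filter (fun f => (f 0, f 1) = (a, b))).card
      = (G.degree a - 1) * (G.degree a - 2) * (G.degree b - 1) := by
  have key : ((univ.filter (sYW G)).filter (fun f => (f 0, f 1) = (a, b))).card
      = (((G.neighborFinset a).erase b).offDiag ×ˢ ((G.neighborFinset b).erase a)).card := by
    apply Finset.card_nbij' (i := fun f => ((f 2, f 3), f 4))
      (j := fun q => ![a, b, q.1.1, q.1.2, q.2])
    · intro f hf
      simp only [mem_coe, mem_filter, mem_univ, true_and, Prod.ext_iff] at hf
      obtain ⟨⟨h01, h02, h03, h14, h23, h12, h13, h04⟩, hf0, hf1⟩ := hf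
      subst hf0; subst hf1
      simp only [mem_product, mem_offDiag, mem_erase, mem_neighborFinset, mem_coe]
      exact ⟨⟨⟨h12.symm, h02⟩, ⟨h13.symm, h03⟩, h23⟩, h04.symm, h14⟩
    · intro q hq
      simp only [mem_product, mem_offDiag, mem_erase, mem_neighborFinset, mem_coe] at hq
      obtain ⟨⟨⟨hc1, hc2⟩, ⟨hd1, hd2⟩, hcd⟩, he1, he2⟩ := hq
      simp only [mem_coe, mem_filter, mem_univ, true_and, Prod.ext_iff, sYW]
      refine ⟨⟨?_, ?_, ?_, ?_, ?_, ?_, ?_, ?_⟩, ?_, ?_⟩ <;> simp [hab, hc2, hd2, he2, hcd]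
      · exact Ne.symm hc1
      · exact Ne.symm hd1
      · exact Ne.symm he1
    · intro f hf
      simp only [mem_coe, mem_filter, Prod.ext_iff] at hf
      obtain ⟨_, hf0, hf1⟩ := hf
      funext i
      fin_cases i <;> simp [hf0, hf1]
    · intro q _
      simp
  rw [key, Finset.card_product, Finset.offDiag_card,
    Finset.card_erase_of_mem (by rwa [mem_neighborFinset]),
    Finset.card_erase_of_mem (by rw [mem_neighborFinset]; exact hab.symm),
    G.card_neighborFinset_eq_degree, G.card_neighborFinset_eq_degree, sY_nat_aux]

private lemma sY_cardW :
    (univ.filter (sYW G)).card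
      = ∑ p ∈ (univ ×ˢ univ).filter (fun p : V × V => G.Adj p.1 p.2),
          (G.degree p.1 - 1) * (G.degree p.1 - 2) * (G.degree p.2 - 1) := by
  rw [Finset.card_eq_sum_card_fiberwise
    (f := fun f : Fin 5 → V => (f 0, f 1))
    (t := (univ ×ˢ univ).filter (fun p : V × V => G.Adj p.1 p.2))
    (by intro f hf
        simp only [mem_coe, mem_filter, mem_univ, true_and, mem_product] at hf ⊢
        exact hf.1)]
  refine Finset.sum_congr rfl ?_
  intro p hp
  simp only [mem_filter, mem_product, mem_univ, true_and] at hp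
  exact sY_fiber_card G p.1 p.2 hp

private lemma sY_decomp :
    (univ.filter (sYW G)).card
      = (univ.filter (fun f : Fin 5 → V => Function.Injective f ∧
          G.Adj (f 0) (f 1) ∧ G.Adj (f 0) (f 2) ∧ G.Adj (f 0) (f 3) ∧ G.Adj (f 1) (f 4))).card
        + ((univ.filter (fun f : Fin 5 → V => sYW G f ∧ f 4 = f 2)).card
          + (univ.filter (fun f : Fin 5 → V => sYW G f ∧ f 4 = f 3)).card) := by
  have e0 : univ.filter (sYW G)
      = (univ.filter (fun f : Fin 5 → V => Function.Injective f ∧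
          G.Adj (f 0) (f 1) ∧ G.Adj (f 0) (f 2) ∧ G.Adj (f 0) (f 3) ∧ G.Adj (f 1) (f 4)))
        ∪ ((univ.filter (fun f : Fin 5 → V => sYW G f ∧ f 4 = f 2))
          ∪ (univ.filter (fun f : Fin 5 → V => sYW G f ∧ f 4 = f 3))) := by
    ext f
    simp only [mem_filter, mem_univ, true_and, mem_union]
    constructor
    · intro hw
      obtain ⟨h01, h02, h03, h14, h23, h12, h13, h04⟩ := hw
      by_cases hc : f 4 = f 2
      · exact Or.inr (Or.inl ⟨⟨h01, h02, h03, h14, h23, h12, h13, h04⟩, hc⟩)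
      by_cases hd : f 4 = f 3
      · exact Or.inr (Or.inr ⟨⟨h01, h02, h03, h14, h23, h12, h13, h04⟩, hd⟩)
      left
      have n01 : f 0 ≠ f 1 := h01.ne
      have n02 : f 0 ≠ f 2 := h02.ne
      have n03 : f 0 ≠ f 3 := h03.ne
      have n14 : f 1 ≠ f 4 := h14.ne
      refine ⟨?_, h01, h02, h03, h14⟩
      intro i j hij
      fin_cases i <;> fin_cases j <;> simp_all
    · rintro (⟨hinj, h01, h02, h03, h14⟩ | ⟨hw, _⟩ | ⟨hw, _⟩)
      · exact ⟨h01, h02, h03, h14, hinj.ne (by decide), hinj.ne (by decide),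
          hinj.ne (by decide), hinj.ne (by decide)⟩
      · exact hw
      · exact hw
  have d23 : Disjoint (univ.filter (fun f : Fin 5 → V => sYW G f ∧ f 4 = f 2))
      (univ.filter (fun f : Fin 5 → V => sYW G f ∧ f 4 = f 3)) := by
    rw [Finset.disjoint_left]
    rintro f hf hg
    simp only [mem_filter, mem_univ, true_and] at hf hg
    exact hf.1.2.2.2.2.1 (hf.2 ▸ hg.2 ▸ rfl)
  have d1 : Disjoint (univ.filter (fun f : Fin 5 → V => Function.Injective f ∧
          G.Adj (f 0) (f 1) ∧ G.Adj (f 0) (f 2) ∧ G.Adj (f 0) (f 3) ∧ G.Adj (f 1) (f 4)))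
      ((univ.filter (fun f : Fin 5 → V => sYW G f ∧ f 4 = f 2))
        ∪ (univ.filter (fun f : Fin 5 → V => sYW G f ∧ f 4 = f 3))) := by
    rw [Finset.disjoint_left]
    rintro f hf hg
    simp only [mem_union, mem_filter, mem_univ, true_and] at hf hg
    rcases hg with ⟨_, h⟩ | ⟨_, h⟩
    · exact absurd (hf.1 h) (by decide)
    · exact absurd (hf.1 h) (by decide)
  rw [e0, Finset.card_union_of_disjoint d1, Finset.card_union_of_disjoint d23]

private lemma sY_tad1 :
    (univ.filter (fun f : Fin 5 → V => sYW G f ∧ f 4 = f 2)).card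
      = (univ.filter (fun f : Fin 4 → V => Function.Injective f ∧
          G.Adj (f 0) (f 1) ∧ G.Adj (f 1) (f 2) ∧ G.Adj (f 2) (f 0) ∧
          G.Adj (f 0) (f 3))).card := by
  apply Finset.card_nbij' (i := fun f => ![f 0, f 1, f 2, f 3])
    (j := fun g => ![g 0, g 1, g 2, g 3, g 2])
  · intro f hf
    rw [Finset.mem_coe] at hf ⊢
    simp only [mem_filter, mem_univ, true_and] at hf ⊢
    simp only [sYW] at hf ⊢
    obtain ⟨⟨h01, h02, h03, h14, h23, h12, h13, h04⟩, h42⟩ := hf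
    have n01 : f 0 ≠ f 1 := h01.ne
    have n02 : f 0 ≠ f 2 := h02.ne
    have n03 : f 0 ≠ f 3 := h03.ne
    refine ⟨?_, ?_, ?_, ?_, ?_⟩
    · intro i j hij
      fin_cases i <;> fin_cases j <;> simp_all
    · simpa using h01
    · simpa using (h42 ▸ h14)
    · simpa using h02.symm
    · simpa using h03
  · intro g hg
    rw [Finset.mem_coe] at hg ⊢
    simp only [mem_filter, mem_univ, true_and] at hg ⊢
    simp only [sYW] at hg ⊢
    obtain ⟨hinj, h01, h12, h20, h03⟩ := hg
    refine ⟨⟨?_, ?_, ?_, ?_, ?_, ?_, ?_, ?_⟩, ?_⟩ <;> simp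
    · exact h01
    · exact h20.symm
    · exact h03
    · exact h12
    · exact hinj.ne (by decide)
    · exact hinj.ne (by decide)
    · exact hinj.ne (by decide)
    · exact h20.ne'
  · intro f hf
    simp only [mem_coe, mem_filter, mem_univ, true_and] at hf
    funext i
    fin_cases i <;> simp [hf.2]
  · intro g _
    funext i
    fin_cases i <;> simp

private lemma sY_tad2 :
    (univ.filter (fun f : Fin 5 → V => sYW G f ∧ f 4 = f 3)).card
      = (univ.filter (fun f : Fin 4 → V => Function.Injective f ∧
          G.Adj (f 0) (f 1) ∧ G.Adj (f 1) (f 2) ∧ G.Adj (f 2) (f 0) ∧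
          G.Adj (f 0) (f 3))).card := by
  apply Finset.card_nbij' (i := fun f => ![f 0, f 1, f 3, f 2])
    (j := fun g => ![g 0, g 1, g 3, g 2, g 2])
  · intro f hf
    rw [Finset.mem_coe] at hf ⊢
    simp only [mem_filter, mem_univ, true_and] at hf ⊢
    simp only [sYW] at hf ⊢
    obtain ⟨⟨h01, h02, h03, h14, h23, h12, h13, h04⟩, h43⟩ := hf
    have n01 : f 0 ≠ f 1 := h01.ne
    have n02 : f 0 ≠ f 2 := h02.ne
    have n03 : f 0 ≠ f 3 := h03.ne
    refine ⟨?_, ?_, ?_, ?_, ?_⟩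
    · intro i j hij
      fin_cases i <;> fin_cases j <;> simp_all
    · simpa using h01
    · simpa using (h43 ▸ h14)
    · simpa using h03.symm
    · simpa using h02
  · intro g hg
    rw [Finset.mem_coe] at hg ⊢
    simp only [mem_filter, mem_univ, true_and] at hg ⊢
    simp only [sYW] at hg ⊢
    obtain ⟨hinj, h01, h12, h20, h03⟩ := hg
    refine ⟨⟨?_, ?_, ?_, ?_, ?_, ?_, ?_, ?_⟩, ?_⟩ <;> simp
    · exact h01
    · exact h03
    · exact h20.symm
    · exact h12
    · exact (hinj.ne (by decide : (3:Fin 4) ≠ 2))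
    · exact hinj.ne (by decide)
    · exact hinj.ne (by decide)
    · exact h20.ne'
  · intro f hf
    simp only [mem_coe, mem_filter, mem_univ, true_and] at hf
    funext i
    fin_cases i <;> simp [hf.2]
  · intro g _
    funext i
    fin_cases i <;> simp

private lemma sY_cast_aux (m k : ℕ) (hm : 1 ≤ m) (hk : 1 ≤ k) :
    (((m-1) * (m-2) * (k-1) : ℕ) : ℝ)
      = ((m:ℝ) - 1) * ((m:ℝ) - 2) * ((k:ℝ) - 1) := by
  match m, hm with
  | 1, _ => simp
  | (n+2), _ =>
    have e1 : n + 2 - 1 = n + 1 := rfl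
    have e2 : n + 2 - 2 = n := rfl
    rw [e1, e2]
    push_cast [Nat.cast_sub hk]
    ring

private lemma sY_swap_sum (A : V → V → ℝ) :
    ∑ p ∈ (univ ×ˢ univ).filter (fun p : V × V => G.Adj p.1 p.2), A p.2 p.1
      = ∑ p ∈ (univ ×ˢ univ).filter (fun p : V × V => G.Adj p.1 p.2), A p.1 p.2 := by
  apply Finset.sum_nbij' (i := Prod.swap) (j := Prod.swap) <;>
    simp [SimpleGraph.adj_comm]

end AuxSY

/-- `|S_Y| = Σ_{(i,j)∈E} [ C(k_i−1,2)(k_j−1) + C(k_j−1,2)(k_i−1) ] − 2|S_{T1S}|`. -/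


theorem sY_eq (G : SimpleGraph V) [DecidableRel G.Adj] :
    sY G = (∑ e ∈ G.edgeFinset,
        Sym2.lift ⟨fun i j =>
          ((G.degree i : ℝ) - 1) * ((G.degree i : ℝ) - 2) / 2 * ((G.degree j : ℝ) - 1)
          + ((G.degree j : ℝ) - 1) * ((G.degree j : ℝ) - 2) / 2 * ((G.degree i : ℝ) - 1),
          fun i j => by ring⟩ e) - 2 * sT1S G := by
  have key : (univ.filter (fun f : Fin 5 → V => Function.Injective f ∧
          G.Adj (f 0) (f 1) ∧ G.Adj (f 0) (f 2) ∧ G.Adj (f 0) (f 3) ∧ G.Adj (f 1) (f 4))).card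
        + ((univ.filter (fun f : Fin 4 → V => Function.Injective f ∧
          G.Adj (f 0) (f 1) ∧ G.Adj (f 1) (f 2) ∧ G.Adj (f 2) (f 0) ∧
          G.Adj (f 0) (f 3))).card
          + (univ.filter (fun f : Fin 4 → V => Function.Injective f ∧
          G.Adj (f 0) (f 1) ∧ G.Adj (f 1) (f 2) ∧ G.Adj (f 2) (f 0) ∧
          G.Adj (f 0) (f 3))).card)
      = ∑ p ∈ (univ ×ˢ univ).filter (fun p : V × V => G.Adj p.1 p.2),
          (G.degree p.1 - 1) * (G.degree p.1 - 2) * (G.degree p.2 - 1) := by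
    rw [← sY_cardW G, sY_decomp G, sY_tad1 G, sY_tad2 G]
  rw [sY_sum_edges_eq_half G _ (fun i j => by ring)]
  have hsplit : ∑ p ∈ (univ ×ˢ univ).filter (fun p : V × V => G.Adj p.1 p.2),
      (((G.degree p.1 : ℝ) - 1) * ((G.degree p.1 : ℝ) - 2) / 2 * ((G.degree p.2 : ℝ) - 1)
        + ((G.degree p.2 : ℝ) - 1) * ((G.degree p.2 : ℝ) - 2) / 2 * ((G.degree p.1 : ℝ) - 1))
      = ∑ p ∈ (univ ×ˢ univ).filter (fun p : V × V => G.Adj p.1 p.2),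
          (((G.degree p.1 : ℝ) - 1) * ((G.degree p.1 : ℝ) - 2) * ((G.degree p.2 : ℝ) - 1)) := by
    rw [Finset.sum_add_distrib,
      sY_swap_sum G (fun a b => ((G.degree a : ℝ) - 1) * ((G.degree a : ℝ) - 2) / 2
        * ((G.degree b : ℝ) - 1)), ← Finset.sum_add_distrib]
    refine Finset.sum_congr rfl fun p _ => by ring
  have hcast : ((∑ p ∈ (univ ×ˢ univ).filter (fun p : V × V => G.Adj p.1 p.2),
          (G.degree p.1 - 1) * (G.degree p.1 - 2) * (G.degree p.2 - 1) : ℕ) : ℝ)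
      = ∑ p ∈ (univ ×ˢ univ).filter (fun p : V × V => G.Adj p.1 p.2),
          (((G.degree p.1 : ℝ) - 1) * ((G.degree p.1 : ℝ) - 2) * ((G.degree p.2 : ℝ) - 1)) := by
    rw [Nat.cast_sum]
    refine Finset.sum_congr rfl fun p hp => ?_
    simp only [mem_filter, mem_product, mem_univ, true_and] at hp
    exact sY_cast_aux _ _ ((G.degree_pos_iff_exists_adj p.1).2 ⟨p.2, hp⟩)
      ((G.degree_pos_iff_exists_adj p.2).2 ⟨p.1, hp.symm⟩)
  have hkeyR := congrArg (Nat.cast : ℕ → ℝ) key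
  rw [Nat.cast_add, Nat.cast_add, hcast] at hkeyR
  unfold sY sT1S
  rw [hsplit]
  linarith [hkeyR]
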